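/- Let G be an abelian group, F a finite-rank free subgroup of G, and φ: F → G a homomorphism. For each positive integer i let Uᵢ = {x ∈ F : φ(x) = i·x}. Then the subgroups Uᵢ (i ≥ 1) form an internal direct sum in F; in particular only finitely many Uᵢ are nonzero, so there exists N such that φ(x) = n·x has only the solution x = 0 for all n ≥ N. -/

import Mathlib

open AddSubgroup

/-- The `p`-height of an element, as an extended natural number. -/
noncomputable def pHeight (p : ℕ) {G : Type*} [AddCommGroup G] (x : G) : ℕ∞ :=
  sSup {n : ℕ∞ | ∃ m : ℕ, n = (m : ℕ∞) ∧ ∃ y : G, p ^ m • y = x}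

/-- `G` is an abelian `p`-group. -/
def IsPGrp (p : ℕ) (G : Type*) [AddCommGroup G] : Prop :=
  ∀ x : G, ∃ n : ℕ, p ^ n • x = 0

/-- `H ∈ Q(G)`: every homomorphism `H → G` extends to an endomorphism of `G`. -/
def InQ {G : Type*} [AddCommGroup G] (H : AddSubgroup G) : Prop :=
  ∀ f : H →+ G, ∃ g : G →+ G, ∀ x : H, g x = f x

/-- `H ∈ P(G)`: every monomorphism `H → G` extends to an endomorphism of `G`. -/
def InP {G : Type*} [AddCommGroup G] (H : AddSubgroup G) : Prop :=
  ∀ f : H →+ G, Function.Injective f → ∃ g : G →+ G, ∀ x : H, g x = f x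

/-- `H ∈ W(G)`: every endomorphism of `H` extends to an endomorphism of `G`. -/
def InW {G : Type*} [AddCommGroup G] (H : AddSubgroup G) : Prop :=
  ∀ f : H →+ H, ∃ g : G →+ G, ∀ x : H, g x = (f x : G)

/-- `K` is an internal direct sum of cyclic subgroups. -/
def IsDirectSumOfCyclics {G : Type*} [AddCommGroup G] (K : AddSubgroup G) : Prop :=
  ∃ (ι : Type) (a : ι → G), (∀ i, a i ∈ K) ∧ (⨆ i, zmultiples (a i)) = K ∧
    iSupIndep (fun i => zmultiples (a i))

/-- `K` is a `p`-pure subgroup: `pⁿG ∩ K = pⁿK`. -/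
def IsPure (p : ℕ) {G : Type*} [AddCommGroup G] (K : AddSubgroup G) : Prop :=
  ∀ n : ℕ, ∀ x ∈ K, (∃ y : G, p ^ n • y = x) → ∃ z ∈ K, p ^ n • z = x

/-- The quotient `G/K` is divisible (equivalently `G = K + pG`). -/
def QuotDivisible (p : ℕ) {G : Type*} [AddCommGroup G] (K : AddSubgroup G) : Prop :=
  ∀ x : G, ∃ y : G, x - p • y ∈ K

/-- The Ulm sequence of `x` has a gap before index `k` (with `h₋₁ = -1`). -/
def HasGapBefore (p : ℕ) {G : Type*} [AddCommGroup G] (x : G) (k : ℕ) : Prop :=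
  if k = 0 then 0 < pHeight p x
  else pHeight p (p ^ (k - 1) • x) + 1 < pHeight p (p ^ k • x)



lemma key_lemma {G : Type*} [AddCommGroup G] {F : AddSubgroup G}
    [NoZeroSMulDivisors ℤ F] (φ : F →+ G) {ι : Type*} (c : ι → ℤ) :
    ∀ s : Finset ι, Set.InjOn c s → ∀ x : ι → F,
      (∀ j ∈ s, φ (x j) = c j • (x j : G)) → ∑ j ∈ s, x j = 0 → ∀ j ∈ s, x j = 0 := by
  classical
  intro s
  induction s using Finset.induction_on with
  | empty => simp
  | @insert j0 t hj0 ih =>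
    intro hc x hx hsum j hj
    set y : ι → F := fun j => (c j - c j0) • x j with hy
    -- coe of sum is zero
    have hcoe : ∑ j ∈ insert j0 t, (x j : G) = 0 := by
      have := congrArg (F.subtype) hsum
      simpa using this
    have hφ : ∑ j ∈ insert j0 t, c j • (x j : G) = 0 := by
      have := congrArg φ hsum
      rw [map_sum, map_zero] at this
      rw [← this]
      exact Finset.sum_congr rfl (fun j hj => (hx j hj).symm)
    have hsub : ∑ j ∈ insert j0 t, (c j - c j0) • (x j : G) = 0 := by
      simp only [sub_smul, Finset.sum_sub_distrib, hφ, ← Finset.smul_sum, hcoe, smul_zero,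
        sub_zero]
    have hsub' : ∑ j ∈ t, (c j - c j0) • (x j : G) = 0 := by
      rw [Finset.sum_insert hj0] at hsub
      simpa using hsub
    have hysum : ∑ j ∈ t, y j = 0 := by
      have : ((∑ j ∈ t, y j : F) : G) = 0 := by
        push_cast [hy]
        exact hsub'
      exact_mod_cast this
    have hyx : ∀ j ∈ t, y j = 0 := by
      refine ih (hc.mono (by simp [Finset.subset_insert])) y (fun j hj => ?_) hysum
      simp only [hy, map_zsmul]
      rw [hx j (Finset.mem_insert_of_mem hj)]
      push_cast
      rw [smul_comm]
    have hxt : ∀ j ∈ t, x j = 0 := by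
      intro j hj
      have hne : c j - c j0 ≠ 0 := by
        intro hcon
        apply hj0
        have : c j = c j0 := by linarith [sub_eq_zero.mp hcon]
        have := hc (Finset.mem_insert_of_mem hj) (Finset.mem_insert_self j0 t) this
        rwa [this] at hj
      have := hyx j hj
      rw [hy] at this
      rcases smul_eq_zero.mp this with h | h
      · exact absurd h hne
      · exact h
    rcases Finset.mem_insert.mp hj with rfl | hjt
    · rw [Finset.sum_insert hj0] at hsum
      rw [Finset.sum_eq_zero hxt, add_zero] at hsum
      exact hsum
    · exact hxt j hjt

theorem stmt18 {G : Type*} [AddCommGroup G] (F : AddSubgroup G)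
    [Module.Free ℤ F] [Module.Finite ℤ F] (φ : F →+ G) :
    iSupIndep (fun i : ℕ+ => AddMonoidHom.ker (φ - (i : ℕ) • F.subtype)) ∧
      ∃ N : ℕ, ∀ n : ℕ, N ≤ n → ∀ x : F, φ x = n • x → x = 0 := by
  classical
  set U : ℕ+ → AddSubgroup F := fun i => AddMonoidHom.ker (φ - (i : ℕ) • F.subtype) with hU
  have mem_U : ∀ (i : ℕ+) (x : F), x ∈ U i ↔ φ x = ((i:ℕ):ℤ) • (x : G) := by
    intro i x
    rw [hU, AddMonoidHom.mem_ker]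
    simp [sub_eq_zero]
  constructor
  · -- independence
    rw [← iSupIndep_map_orderIso_iff (AddSubgroup.toIntSubmodule : AddSubgroup F ≃o _)]
    rw [iSupIndep_def]
    intro i
    rw [Submodule.disjoint_def]
    intro x hx1 hx2
    rw [iSup_subtype'] at hx2
    obtain ⟨f, hf, hfsum⟩ := (Submodule.mem_iSup_iff_exists_finsupp _ _).mp hx2
    set s : Finset ℕ+ := insert i (f.support.map (Function.Embedding.subtype _)) with hs
    set x' : ℕ+ → F := fun j => if h : j ≠ i then f ⟨j, h⟩ else -x with hx'
    have hinot : i ∉ f.support.map (Function.Embedding.subtype _) := by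
      simp
    have hcond : ∀ j ∈ s, φ (x' j) = ((j:ℕ):ℤ) • (x' j : G) := by
      intro j hj
      rcases eq_or_ne j i with rfl | hne
      · have : x' j = -x := by simp [hx']
        rw [this]
        have hx1' : x ∈ U j := hx1
        rw [mem_U] at hx1'
        simp [hx1']
      · have : x' j = f ⟨j, hne⟩ := by simp [hx', hne]
        rw [this]
        have h3 := hf ⟨j, hne⟩
        have h4 : f ⟨j, hne⟩ ∈ U j := h3
        exact (mem_U j _).mp h4
    have hsum : ∑ j ∈ s, x' j = 0 := by
      rw [hs, Finset.sum_insert hinot, Finset.sum_map]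
      have h1 : x' i = -x := by simp [hx']
      have h2 : ∀ a ∈ f.support, x' ((Function.Embedding.subtype _) a) = f a := by
        intro a _
        simp [hx', a.prop]
      rw [h1, Finset.sum_congr rfl h2]
      have h3 : ∑ a ∈ f.support, f a = x := hfsum
      rw [h3]
      simp
    have hinj : Set.InjOn (fun j : ℕ+ => ((j:ℕ):ℤ)) s := by
      intro a _ b _ h
      dsimp only at h
      exact_mod_cast h
    haveI : IsAddTorsionFree F := Module.isTorsionFree_int_iff_isAddTorsionFree.mp inferInstance
    have := key_lemma φ _ s hinj x' hcond hsum i (by simp [hs])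
    have : x' i = 0 := this
    rw [hx'] at this
    simp only [ne_eq, not_true_eq_false, dite_false] at this
    simpa [neg_eq_zero] using this
  · -- finiteness
    by_contra hcon
    push_neg at hcon
    set A : Set ℕ := {n | ∃ x : F, φ x = n • (x : G) ∧ x ≠ 0} with hA
    have hAinf : A.Infinite := by
      intro hfin
      obtain ⟨b, hb⟩ := hfin.bddAbove
      obtain ⟨n, hn, x, hx, hxne⟩ := hcon (b + 1)
      have : n ≤ b := hb ⟨x, hx, hxne⟩
      omega
    obtain ⟨t, hts, hcard⟩ := hAinf.exists_subset_card_eq (Module.finrank ℤ F + 1)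
    have hchoice : ∀ n ∈ t, ∃ x : F, φ x = n • (x : G) ∧ x ≠ 0 := fun n hn => hts hn
    choose v hv hvne using hchoice
    have li : LinearIndependent ℤ (fun n : t => v n n.2) := by
      rw [Fintype.linearIndependent_iff]
      intro g hg
      have hinj : Set.InjOn (fun j : t => ((j:ℕ):ℤ)) (Finset.univ : Finset t) := by
        intro a _ b _ h
        dsimp only at h
        exact Subtype.ext (by exact_mod_cast h)
      have hcond : ∀ j ∈ (Finset.univ : Finset t),
          φ (g j • v j j.2) = ((j:ℕ):ℤ) • ((g j • v j j.2 : F) : G) := by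
        intro j _
        rw [map_zsmul, hv j j.2]
        push_cast
        rw [smul_comm, natCast_zsmul]
      haveI : IsAddTorsionFree F := Module.isTorsionFree_int_iff_isAddTorsionFree.mp inferInstance
      have := key_lemma φ _ Finset.univ hinj _ hcond hg
      intro j
      have hj := this j (Finset.mem_univ j)
      rcases smul_eq_zero.mp hj with h | h
      · exact h
      · exact absurd h (hvne j j.2)
    have hle := li.fintype_card_le_finrank
    rw [Fintype.card_coe, hcard] at hle
    omega
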